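/- arXiv:2205.02353 — 3 statements merged into one kernel-verified Lean document; each statement's English description precedes it below -/
import Mathlib

section
/- Let I : A ↪ B be a Dwyer map with complementary cosieve V ⊆ B, let F : A ⥤ C be any functor, and suppose the square with top F, left I, right J : C ⥤ D, bottom G : B ⥤ D is a pushout square in Cat. Then: the function on objects induced by J is injective, the function on objects induced by the restriction of G to V is injective, these two functions have disjoint images, and every object of D lies in the image of one of them (so the objects of D are in bijection with ob C ⊔ ob V). -/
open CategoryTheory

/-- The minimal cosieve of `B` generated by the image of `I : A ⥤ B`:
the set of objects of `B` that are the codomain of some arrow whose domain lies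
in the image of `I`. -/
def minCosieve {A B : Type*} [Category A] [Category B] (I : A ⥤ B) : Set B :=
  {w : B | ∃ a : A, Nonempty (I.obj a ⟶ w)}

/-- The corestriction of `I : A ⥤ B` to the minimal cosieve generated by its image. -/
def inclW {A B : Type*} [Category A] [Category B] (I : A ⥤ B) :
    A ⥤ ObjectProperty.FullSubcategory (fun b => b ∈ minCosieve I) where
  obj a := ⟨I.obj a, a, ⟨𝟙 _⟩⟩
  map f := ObjectProperty.homMk (I.map f)
  map_id a := by ext; exact I.map_id a
  map_comp f g := by ext; exact I.map_comp f g

/-- A functor `I : A ⥤ B` is a Dwyer map if it is a full subcategory inclusion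
(fully faithful and injective on objects), it is a sieve inclusion (classified by a
functor `χ : B ⥤ 𝟚` with `χ⁻¹(0)` equal to the image of `I`, where `𝟚 = Fin 2` is
the two-object poset category `{0 < 1}`), and the corestriction of `I` to the
minimal cosieve `W` containing the image of `I` admits a right adjoint `R` whose
unit is the identity (a right adjoint left inverse). -/
structure IsDwyerMap {A B : Type*} [Category A] [Category B] (I : A ⥤ B) : Prop where
  full : I.Full
  faithful : I.Faithful
  injOnObj : Function.Injective I.obj
  sieve : ∃ χ : B ⥤ Fin 2, ∀ b : B, χ.obj b = 0 ↔ b ∈ Set.range I.obj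
  rali : ∃ (R : ObjectProperty.FullSubcategory (fun b => b ∈ minCosieve I) ⥤ A)
    (h : inclW I ⋙ R = 𝟭 A) (adj : inclW I ⊣ R), adj.unit = eqToHom h.symm


universe u

/-- The codiscrete category on a type `X`. -/
def Codisc (X : Type u) : Type u := X

instance (X : Type u) : SmallCategory (Codisc X) where
  Hom _ _ := PUnit
  id _ := ⟨⟩
  comp _ _ := ⟨⟩

instance (X : Type u) (x y : Codisc X) : Subsingleton (x ⟶ y) := by
  dsimp [Codisc, Quiver.Hom]; infer_instance

/-- The functor to a codiscrete category induced by a function on objects. -/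
def toCodisc {C : Type*} [Category C] {X : Type u} (f : C → X) : C ⥤ Codisc X where
  obj := f
  map _ := ⟨⟩

lemma codisc_ext {C : Type*} [Category C] {X : Type u} {F G : C ⥤ Codisc X}
    (h : ∀ c, F.obj c = G.obj c) : F = G :=
  CategoryTheory.Functor.ext h (fun _ _ _ => Subsingleton.elim _ _)

open Classical in
/-- If `I : A ↪ B` is a Dwyer map with complementary cosieve `V` (the objects of `B`
not in the image of `I`) and the square with top `F`, left `I`, right `J`, bottom `G`
is a pushout in `Cat`, then `J` is injective on objects, `G` is injective on the
objects of `V`, the images of these two object functions are disjoint, and they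
jointly exhaust the objects of `D`; i.e. `ob D ≅ ob C ⊔ ob V`. -/
theorem pushout_obj_bijection
    {A B C D : Type u} [SmallCategory A] [SmallCategory B] [SmallCategory C] [SmallCategory D]
    (I : A ⥤ B) (F : A ⥤ C) (J : C ⥤ D) (G : B ⥤ D)
    (hI : IsDwyerMap I)
    (sq : IsPushout (C := Cat.{u,u}) (Z := Cat.of A) (X := Cat.of C) (Y := Cat.of B)
      (P := Cat.of D) F.toCatHom I.toCatHom J.toCatHom G.toCatHom) :
    Function.Injective J.obj ∧
    Set.InjOn G.obj {b : B | b ∉ Set.range I.obj} ∧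
    (∀ (c : C) (v : B), v ∉ Set.range I.obj → J.obj c ≠ G.obj v) ∧
    (∀ d : D, (∃ c : C, J.obj c = d) ∨ (∃ v : B, v ∉ Set.range I.obj ∧ G.obj v = d)) := by
  -- the test set
  set X : Type u := C ⊕ {b : B // b ∉ Set.range I.obj} with hX
  -- object function on B
  set r : B → X := fun b =>
    if h : b ∈ Set.range I.obj then Sum.inl (F.obj h.choose) else Sum.inr ⟨b, h⟩ with hr
  have hrI : ∀ a : A, r (I.obj a) = Sum.inl (F.obj a) := by
    intro a
    have h : I.obj a ∈ Set.range I.obj := ⟨a, rfl⟩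
    have : h.choose = a := hI.injOnObj h.choose_spec
    simp [hr, dif_pos h, this]
  have hrV : ∀ (v : B) (h : v ∉ Set.range I.obj), r v = Sum.inr ⟨v, h⟩ := by
    intro v h; simp only [hr]; rw [dif_neg h]
  -- the two functors into the codiscrete category on X
  have w : F ⋙ toCodisc (Sum.inl : C → X) = I ⋙ toCodisc r :=
    codisc_ext (fun a => (hrI a).symm)
  set Φ : Cat.of D ⟶ Cat.of (Codisc X) :=
    sq.desc (W := Cat.of (Codisc X)) (toCodisc Sum.inl).toCatHom (toCodisc r).toCatHom (congrArg Functor.toCatHom w) with hΦ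
  have hJΦ : ∀ c : C, Φ.toFunctor.obj (J.obj c) = Sum.inl c := fun c =>
    Functor.congr_obj (congrArg Cat.Hom.toFunctor (sq.inl_desc (W := Cat.of (Codisc X)) (toCodisc Sum.inl).toCatHom (toCodisc r).toCatHom (congrArg Functor.toCatHom w))) c
  have hGΦ : ∀ b : B, Φ.toFunctor.obj (G.obj b) = r b := fun b =>
    Functor.congr_obj (congrArg Cat.Hom.toFunctor (sq.inr_desc (W := Cat.of (Codisc X)) (toCodisc Sum.inl).toCatHom (toCodisc r).toCatHom (congrArg Functor.toCatHom w))) b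
  refine ⟨?_, ?_, ?_, ?_⟩
  · intro c c' h
    have := (hJΦ c).symm.trans ((congrArg Φ.toFunctor.obj h).trans (hJΦ c'))
    exact Sum.inl.inj this
  · intro v hv v' hv' h
    have := (hGΦ v).symm.trans ((congrArg Φ.toFunctor.obj h).trans (hGΦ v'))
    rw [hrV v hv, hrV v' hv'] at this
    exact congrArg Subtype.val (Sum.inr.inj this)
  · intro c v hv h
    have := (hJΦ c).symm.trans ((congrArg Φ.toFunctor.obj h).trans (hGΦ v))
    rw [hrV v hv] at this
    exact Sum.inl_ne_inr this
  · -- joint surjectivity, via uniqueness of maps out of the pushout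
    have hsqw : ∀ a : A, J.obj (F.obj a) = G.obj (I.obj a) := fun a =>
      Functor.congr_obj (congrArg Cat.Hom.toFunctor sq.w) a
    set p : Cat.of D ⟶ Cat.of (Codisc (ULift.{u} Prop)) := (toCodisc (fun _ => ⟨True⟩)).toCatHom with hp
    set q : Cat.of D ⟶ Cat.of (Codisc (ULift.{u} Prop)) := (toCodisc (fun d =>
      ⟨(∃ c : C, J.obj c = d) ∨ (∃ v : B, v ∉ Set.range I.obj ∧ G.obj v = d)⟩)).toCatHom with hq
    have hpq : p = q := by
      apply sq.hom_ext
      · refine Cat.ext (codisc_ext (C := C) (F := J ⋙ _) (G := J ⋙ _) (fun c => ?_))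
        show (⟨True⟩ : ULift Prop) = _
        exact congrArg ULift.up (propext ⟨fun _ => Or.inl ⟨c, rfl⟩, fun _ => trivial⟩)
      · refine Cat.ext (codisc_ext (C := B) (F := G ⋙ _) (G := G ⋙ _) (fun b => ?_))
        show (⟨True⟩ : ULift Prop) = _
        refine congrArg ULift.up (propext ⟨fun _ => ?_, fun _ => trivial⟩)
        by_cases hb : b ∈ Set.range I.obj
        · obtain ⟨a, rfl⟩ := hb
          exact Or.inl ⟨F.obj a, hsqw a⟩
        · exact Or.inr ⟨b, hb, rfl⟩
    intro d
    have := Functor.congr_obj (congrArg Cat.Hom.toFunctor hpq) d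
    have h2 : True = ((∃ c : C, J.obj c = d) ∨ (∃ v : B, v ∉ Set.range I.obj ∧ G.obj v = d)) :=
      congrArg ULift.down this
    exact h2 ▸ trivial
end

section
/- Let I : A ↪ B be a Dwyer map with complementary cosieve V ⊆ B, let F : A ⥤ C be any functor, and suppose the square with top F, left I, right J : C ⥤ D, bottom G : B ⥤ D is a pushout square in Cat. Then for all objects v, v' of B lying in V, the map B(v,v') → D(Gv, Gv') induced by G is a bijection; that is, G restricted to the cosieve V is fully faithful into D. -/
open CategoryTheory

universe u

section Model
variable {A B C D : Type u} [SmallCategory A] [SmallCategory B] [SmallCategory C] [SmallCategory D]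

def MObj (I : A ⥤ B) (_J : C ⥤ D) (_G : B ⥤ D) : Type u :=
  C ⊕ {v : B // v ∉ Set.range I.obj}

variable (I : A ⥤ B) (J : C ⥤ D) (G : B ⥤ D)

def Minl (c : C) : MObj I J G := Sum.inl c
def Minr (v : {v : B // v ∉ Set.range I.obj}) : MObj I J G := Sum.inr v

def MHom : MObj I J G → MObj I J G → Type u
  | .inl c, .inl c' => J.obj c ⟶ J.obj c'
  | .inl c, .inr v => J.obj c ⟶ G.obj v.1
  | .inr _, .inl _ => PEmpty
  | .inr v, .inr v' => v.1 ⟶ v'.1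

def Mid : ∀ X : MObj I J G, MHom I J G X X
  | .inl c => 𝟙 (J.obj c)
  | .inr v => 𝟙 v.1

def Mcomp : ∀ {X Y Z : MObj I J G}, MHom I J G X Y → MHom I J G Y Z → MHom I J G X Z
  | .inl _, .inl _, .inl _, f, g => f ≫ g
  | .inl _, .inl _, .inr _, f, g => f ≫ g
  | .inl _, .inr _, .inr _, f, g => f ≫ G.map g
  | .inr _, .inr _, .inr _, f, g => f ≫ g
  | .inr _, .inl _, _, f, _ => f.elim
  | .inl _, .inr _, .inl _, _, g => g.elim
  | .inr _, .inr _, .inl _, _, g => g.elim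

instance : Category (MObj I J G) where
  Hom := MHom I J G
  id := Mid I J G
  comp := Mcomp I J G
  id_comp {X Y} f := by
    cases X <;> cases Y <;> first | exact f.elim | (simp [Mcomp, Mid]; exact Category.id_comp _)
  comp_id {X Y} f := by
    cases X <;> cases Y <;> first | exact f.elim | (simp [Mcomp, Mid]; exact Category.comp_id _)
  assoc {W X Y Z} f g h := by
    cases W <;> cases X <;> cases Y <;> cases Z <;>
      first | exact f.elim | exact g.elim | exact h.elim | (simp [Mcomp]; first | exact Category.assoc _ _ _ | exact (Category.assoc _ _ _).trans (congrArg _ (G.map_comp _ _).symm))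

/-- Coercions from `D`/`B`-level morphism data to morphisms of the model. -/
def homLL {c c' : C} (f : J.obj c ⟶ J.obj c') : Minl I J G c ⟶ Minl I J G c' := f
def homLR {c : C} {v : {v : B // v ∉ Set.range I.obj}} (f : J.obj c ⟶ G.obj v.1) :
    Minl I J G c ⟶ Minr I J G v := f
def homRR {v v' : {v : B // v ∉ Set.range I.obj}} (f : v.1 ⟶ v'.1) :
    Minr I J G v ⟶ Minr I J G v' := f

-- composition rules, all `rfl`
lemma comp_ll {c c' c'' : C} (x : J.obj c ⟶ J.obj c') (y : J.obj c' ⟶ J.obj c'') :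
    homLL I J G x ≫ homLL I J G y = homLL I J G (x ≫ y) := rfl

lemma comp_lr {c c' : C} {v : {v : B // v ∉ Set.range I.obj}}
    (x : J.obj c ⟶ J.obj c') (y : J.obj c' ⟶ G.obj v.1) :
    homLL I J G x ≫ homLR I J G y = homLR I J G (x ≫ y) := rfl

lemma comp_lrr {c : C} {v v' : {v : B // v ∉ Set.range I.obj}}
    (x : J.obj c ⟶ G.obj v.1) (y : v.1 ⟶ v'.1) :
    homLR I J G x ≫ homRR I J G y = homLR I J G (x ≫ G.map y) := rfl

lemma comp_rr {v v' v'' : {v : B // v ∉ Set.range I.obj}}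
    (x : v.1 ⟶ v'.1) (y : v'.1 ⟶ v''.1) :
    homRR I J G x ≫ homRR I J G y = homRR I J G (x ≫ y) := rfl

lemma id_inl (c : C) : 𝟙 (Minl I J G c) = homLL I J G (𝟙 (J.obj c)) := rfl
lemma id_inr (v : {v : B // v ∉ Set.range I.obj}) : 𝟙 (Minr I J G v) = homRR I J G (𝟙 v.1) := rfl

lemma homLL_inj {c c' : C} {x y : J.obj c ⟶ J.obj c'} (h : homLL I J G x = homLL I J G y) :
    x = y := h
lemma homRR_inj {v v' : {v : B // v ∉ Set.range I.obj}} {x y : v.1 ⟶ v'.1}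
    (h : homRR I J G x = homRR I J G y) : x = y := h
lemma homLR_inj {c : C} {v : {v : B // v ∉ Set.range I.obj}} {x y : J.obj c ⟶ G.obj v.1}
    (h : homLR I J G x = homLR I J G y) : x = y := h

variable (F : A ⥤ C)

lemma noArrow (hs : ∃ χ : B ⥤ Fin 2, ∀ b : B, χ.obj b = 0 ↔ b ∈ Set.range I.obj)
    {v b' : B} (hv : v ∉ Set.range I.obj) (hb' : b' ∈ Set.range I.obj)
    (f : v ⟶ b') : False := by
  obtain ⟨χ, hχ⟩ := hs
  have h1 : χ.obj v ≠ 0 := fun h => hv ((hχ v).1 h)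
  have hle : χ.obj v ≤ χ.obj b' := leOfHom (χ.map f)
  rw [(hχ b').2 hb'] at hle
  exact h1 (le_antisymm hle (Fin.zero_le _))

open Classical in
noncomputable def Gobj (b : B) : MObj I J G :=
  if h : b ∈ Set.range I.obj then Minl I J G (F.obj h.choose) else Minr I J G ⟨b, h⟩

lemma Gobj_pos {b : B} (h : b ∈ Set.range I.obj) :
    Gobj I J G F b = Minl I J G (F.obj h.choose) := dif_pos h

lemma Gobj_neg {b : B} (h : b ∉ Set.range I.obj) :
    Gobj I J G F b = Minr I J G ⟨b, h⟩ := dif_neg h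

lemma e_inl (hw : F ⋙ J = I ⋙ G) {b : B} (h : b ∈ Set.range I.obj) :
    J.obj (F.obj h.choose) = G.obj b := by
  have h1 := Functor.congr_obj hw h.choose
  simp only [Functor.comp_obj] at h1
  rw [h1, h.choose_spec]

open Classical in
noncomputable def Gmap (hs : ∃ χ : B ⥤ Fin 2, ∀ b : B, χ.obj b = 0 ↔ b ∈ Set.range I.obj)
    (hw : F ⋙ J = I ⋙ G) {b b' : B} (f : b ⟶ b') : Gobj I J G F b ⟶ Gobj I J G F b' :=
  if h : b ∈ Set.range I.obj then
    if h' : b' ∈ Set.range I.obj then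
      eqToHom (Gobj_pos I J G F h) ≫
        homLL I J G (eqToHom (e_inl I J G F hw h) ≫ G.map f ≫ eqToHom (e_inl I J G F hw h').symm) ≫
        eqToHom (Gobj_pos I J G F h').symm
    else
      eqToHom (Gobj_pos I J G F h) ≫
        homLR I J G (eqToHom (e_inl I J G F hw h) ≫ G.map f) ≫
        eqToHom (Gobj_neg I J G F h').symm
  else
    if h' : b' ∈ Set.range I.obj then (noArrow I hs h h' f).elim
    else
      eqToHom (Gobj_neg I J G F h) ≫
        homRR I J G f ≫
        eqToHom (Gobj_neg I J G F h').symm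


lemma comp_ll_assoc {c c' c'' : C} (x : J.obj c ⟶ J.obj c') (y : J.obj c' ⟶ J.obj c'')
    {Z : MObj I J G} (z : Minl I J G c'' ⟶ Z) :
    homLL I J G x ≫ homLL I J G y ≫ z = homLL I J G (x ≫ y) ≫ z := by
  rw [← Category.assoc, comp_ll]

lemma comp_lr_assoc {c c' : C} {v : {v : B // v ∉ Set.range I.obj}}
    (x : J.obj c ⟶ J.obj c') (y : J.obj c' ⟶ G.obj v.1)
    {Z : MObj I J G} (z : Minr I J G v ⟶ Z) :
    homLL I J G x ≫ homLR I J G y ≫ z = homLR I J G (x ≫ y) ≫ z := by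
  rw [← Category.assoc, comp_lr]

lemma comp_lrr_assoc {c : C} {v v' : {v : B // v ∉ Set.range I.obj}}
    (x : J.obj c ⟶ G.obj v.1) (y : v.1 ⟶ v'.1) {Z : MObj I J G} (z : Minr I J G v' ⟶ Z) :
    homLR I J G x ≫ homRR I J G y ≫ z = homLR I J G (x ≫ G.map y) ≫ z := by
  rw [← Category.assoc, comp_lrr]

lemma comp_rr_assoc {v v' v'' : {v : B // v ∉ Set.range I.obj}}
    (x : v.1 ⟶ v'.1) (y : v'.1 ⟶ v''.1) {Z : MObj I J G} (z : Minr I J G v'' ⟶ Z) :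
    homRR I J G x ≫ homRR I J G y ≫ z = homRR I J G (x ≫ y) ≫ z := by
  rw [← Category.assoc, comp_rr]

lemma Gmap_id (hs : ∃ χ : B ⥤ Fin 2, ∀ b : B, χ.obj b = 0 ↔ b ∈ Set.range I.obj)
    (hw : F ⋙ J = I ⋙ G) (b : B) :
    Gmap I J G F hs hw (𝟙 b) = 𝟙 (Gobj I J G F b) := by
  by_cases h : b ∈ Set.range I.obj
  · unfold Gmap; rw [dif_pos h, dif_pos h]
    simp only [CategoryTheory.Functor.map_id, Category.id_comp, eqToHom_trans, eqToHom_refl]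
    rw [show homLL I J G (𝟙 (J.obj (F.obj h.choose))) = 𝟙 (Minl I J G (F.obj h.choose)) from rfl]
    simp
  · unfold Gmap; rw [dif_neg h, dif_neg h]
    rw [show homRR I J G (𝟙 b) = 𝟙 (Minr I J G ⟨b, h⟩) from rfl]
    simp

lemma Gmap_comp (hs : ∃ χ : B ⥤ Fin 2, ∀ b : B, χ.obj b = 0 ↔ b ∈ Set.range I.obj)
    (hw : F ⋙ J = I ⋙ G) {b b' b'' : B} (f : b ⟶ b') (g : b' ⟶ b'') :
    Gmap I J G F hs hw (f ≫ g) = Gmap I J G F hs hw f ≫ Gmap I J G F hs hw g := by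
  by_cases h : b ∈ Set.range I.obj <;> by_cases h' : b' ∈ Set.range I.obj <;>
    by_cases h'' : b'' ∈ Set.range I.obj
  · unfold Gmap; rw [dif_pos h, dif_pos h'', dif_pos h, dif_pos h', dif_pos h', dif_pos h'']
    simp [comp_ll, comp_ll_assoc]
  · unfold Gmap; rw [dif_pos h, dif_neg h'', dif_pos h, dif_pos h', dif_pos h', dif_neg h'']
    simp [comp_lr, comp_lr_assoc]
  · exact (noArrow I hs h' h'' g).elim
  · unfold Gmap; rw [dif_pos h, dif_neg h'', dif_pos h, dif_neg h', dif_neg h', dif_neg h'']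
    simp [comp_lrr, comp_lrr_assoc]
  · exact (noArrow I hs h h' f).elim
  · exact (noArrow I hs h h' f).elim
  · exact (noArrow I hs h' h'' g).elim
  · unfold Gmap; rw [dif_neg h, dif_neg h'', dif_neg h, dif_neg h', dif_neg h', dif_neg h'']
    simp [comp_rr, comp_rr_assoc]

noncomputable def Gfun (hs : ∃ χ : B ⥤ Fin 2, ∀ b : B, χ.obj b = 0 ↔ b ∈ Set.range I.obj)
    (hw : F ⋙ J = I ⋙ G) : B ⥤ MObj I J G where
  obj := Gobj I J G F
  map := Gmap I J G F hs hw
  map_id := Gmap_id I J G F hs hw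
  map_comp := Gmap_comp I J G F hs hw


/-- The left leg `C ⥤ M`. -/
def Jmod : C ⥤ MObj I J G where
  obj c := Minl I J G c
  map f := homLL I J G (J.map f)
  map_id c := by
    show homLL I J G (J.map (𝟙 c)) = 𝟙 (Minl I J G c)
    rw [J.map_id, ← id_inl]
  map_comp f g := by
    show homLL I J G (J.map (_ ≫ _)) = homLL I J G (J.map _) ≫ homLL I J G (J.map _)
    rw [J.map_comp, ← comp_ll]

/-- The object part of the comparison functor `M ⥤ D`. -/
def Pobj : MObj I J G → D
  | .inl c => J.obj c
  | .inr v => G.obj v.1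

/-- The comparison functor `M ⥤ D`. -/
def Psi : MObj I J G ⥤ D where
  obj := Pobj I J G
  map {X Y} f := match X, Y, f with
    | .inl _, .inl _, f => f
    | .inl _, .inr _, f => f
    | .inr _, .inl _, f => f.elim
    | .inr _, .inr _, f => G.map f
  map_id X := by cases X <;> first | rfl | exact G.map_id _
  map_comp {X Y Z} f g := by
    cases X <;> cases Y <;> cases Z <;>
      first | exact f.elim | exact g.elim | rfl | exact G.map_comp f g

lemma Psi_ll {c c' : C} (x : J.obj c ⟶ J.obj c') : (Psi I J G).map (homLL I J G x) = x := rfl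
lemma Psi_lr {c : C} {v : {v : B // v ∉ Set.range I.obj}} (x : J.obj c ⟶ G.obj v.1) :
    (Psi I J G).map (homLR I J G x) = x := rfl
lemma Psi_rr {v v' : {v : B // v ∉ Set.range I.obj}} (x : v.1 ⟶ v'.1) :
    (Psi I J G).map (homRR I J G x) = G.map x := rfl

lemma eqToHom_ll {c c' : C} (e : Minl I J G c = Minl I J G c') :
    eqToHom e = homLL I J G (eqToHom (congrArg J.obj (Sum.inl.inj e))) := by
  have hc : c = c' := Sum.inl.inj e
  subst hc
  rw [Subsingleton.elim e rfl]
  rfl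

lemma eqToHom_rr {v v' : {v : B // v ∉ Set.range I.obj}} (e : Minr I J G v = Minr I J G v') :
    eqToHom e = homRR I J G (eqToHom (congrArg Subtype.val (Sum.inr.inj e))) := by
  have hc : v = v' := Sum.inr.inj e
  subst hc
  rw [Subsingleton.elim e rfl]
  rfl

lemma JmodPsi : Jmod I J G ⋙ Psi I J G = J := rfl

lemma GfunPsi (hs : ∃ χ : B ⥤ Fin 2, ∀ b : B, χ.obj b = 0 ↔ b ∈ Set.range I.obj)
    (hw : F ⋙ J = I ⋙ G) : Gfun I J G F hs hw ⋙ Psi I J G = G := by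
  refine CategoryTheory.Functor.ext (fun b => ?_) (fun b b' f => ?_)
  · show (Psi I J G).obj (Gobj I J G F b) = G.obj b
    by_cases h : b ∈ Set.range I.obj
    · rw [Gobj_pos I J G F h]
      exact e_inl I J G F hw h
    · rw [Gobj_neg I J G F h]
      rfl
  · show (Psi I J G).map (Gmap I J G F hs hw f) = _
    by_cases h : b ∈ Set.range I.obj <;> by_cases h' : b' ∈ Set.range I.obj
    · unfold Gmap; rw [dif_pos h, dif_pos h']
      rw [Functor.map_comp, Functor.map_comp, eqToHom_map, eqToHom_map, Psi_ll]
      simp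
      erw [Category.assoc, Category.assoc, eqToHom_trans_assoc, eqToHom_trans]
      rfl
    · unfold Gmap; rw [dif_pos h, dif_neg h']
      rw [Functor.map_comp, Functor.map_comp, eqToHom_map, eqToHom_map, Psi_lr]
      simp
      erw [Category.assoc, eqToHom_trans_assoc]
      rfl
    · exact (noArrow I hs h h' f).elim
    · unfold Gmap; rw [dif_neg h, dif_neg h']
      rw [Functor.map_comp, Functor.map_comp, eqToHom_map, eqToHom_map, Psi_rr]
      rfl

lemma sqw (hinj : Function.Injective I.obj)
    (hs : ∃ χ : B ⥤ Fin 2, ∀ b : B, χ.obj b = 0 ↔ b ∈ Set.range I.obj)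
    (hw : F ⋙ J = I ⋙ G) : F ⋙ Jmod I J G = I ⋙ Gfun I J G F hs hw := by
  refine CategoryTheory.Functor.ext (fun a => ?_) (fun a a' f => ?_)
  · show Minl I J G (F.obj a) = Gobj I J G F (I.obj a)
    have h : I.obj a ∈ Set.range I.obj := Set.mem_range_self a
    rw [Gobj_pos I J G F h, hinj h.choose_spec]
  · have h : I.obj a ∈ Set.range I.obj := Set.mem_range_self a
    have h' : I.obj a' ∈ Set.range I.obj := Set.mem_range_self a'
    have p1 : Minl I J G (F.obj a) = Gobj I J G F (I.obj a) := by
      rw [Gobj_pos I J G F h, hinj h.choose_spec]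
    have p2 : Gobj I J G F (I.obj a') = Minl I J G (F.obj a') := by
      rw [Gobj_pos I J G F h', hinj h'.choose_spec]
    show homLL I J G (J.map (F.map f)) = eqToHom p1 ≫ Gmap I J G F hs hw (I.map f) ≫ eqToHom p2
    unfold Gmap; rw [dif_pos h, dif_pos h']
    simp only [Category.assoc, eqToHom_trans, eqToHom_trans_assoc]
    rw [eqToHom_ll, eqToHom_ll, comp_ll_assoc, comp_ll]
    refine congrArg (homLL I J G) ?_
    have hjf := Functor.congr_hom hw f
    simp only [Functor.comp_map] at hjf
    rw [hjf]
    simp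

end Model


universe v

theorem pushout_inr_fullyFaithful_on_cosieve'
    {A B C D : Type u} [SmallCategory A] [SmallCategory B] [SmallCategory C] [SmallCategory D]
    (I : A ⥤ B) (F : A ⥤ C) (J : C ⥤ D) (G : B ⥤ D)
    (hinj : Function.Injective I.obj)
    (hs : ∃ χ : B ⥤ Fin 2, ∀ b : B, χ.obj b = 0 ↔ b ∈ Set.range I.obj)
    (sq : IsPushout (C := Cat.{u,u}) (Z := Cat.of A) (X := Cat.of C) (Y := Cat.of B)
      (P := Cat.of D) F.toCatHom I.toCatHom J.toCatHom G.toCatHom) :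
    ∀ v v' : B, v ∉ Set.range I.obj → v' ∉ Set.range I.obj →
      Function.Bijective (fun f : v ⟶ v' => G.map f) := by
  intro v v' hv hv'
  have hw : F ⋙ J = I ⋙ G := congrArg Cat.Hom.toFunctor sq.w
  have w0 : (F).toCatHom ≫ (Jmod I J G).toCatHom =
      (I).toCatHom ≫ (Gfun I J G F hs hw).toCatHom :=
    Cat.Hom.ext (sqw I J G F hinj hs hw)
  let Φ : Cat.of D ⟶ Cat.of (MObj I J G) := sq.desc _ _ w0
  let Φf : D ⥤ MObj I J G := Φ.toFunctor
  have hΦJ : (J).toCatHom ≫ Φ = (Jmod I J G).toCatHom :=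
    sq.inl_desc _ _ w0
  have hΦG : (G).toCatHom ≫ Φ = (Gfun I J G F hs hw).toCatHom :=
    sq.inr_desc _ _ w0
  have hretr : Φ ≫ (Psi I J G).toCatHom = 𝟙 (Cat.of D) := by
    apply sq.hom_ext
    · rw [← Category.assoc, hΦJ, Category.comp_id]
      exact Cat.Hom.ext (JmodPsi I J G)
    · rw [← Category.assoc, hΦG, Category.comp_id]
      exact Cat.Hom.ext (GfunPsi I J G F hs hw)
  have hΦG' : G ⋙ Φf = Gfun I J G F hs hw := congrArg Cat.Hom.toFunctor hΦG
  have hretr' : Φf ⋙ Psi I J G = 𝟭 D := congrArg Cat.Hom.toFunctor hretr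
  constructor
  · intro f f' hff
    have h1 := Functor.congr_hom hΦG' f
    have h2 := Functor.congr_hom hΦG' f'
    simp only [Functor.comp_map] at h1 h2
    have h3 : Gmap I J G F hs hw f = Gmap I J G F hs hw f' := by
      have : Φf.map (G.map f) = Φf.map (G.map f') := by
        simp only at hff; rw [hff]
      rw [h1, h2] at this
      have h3' : (Gfun I J G F hs hw).map f = (Gfun I J G F hs hw).map f' := by
        simpa using congrArg
          (fun z => eqToHom (Functor.congr_obj hΦG' v).symm ≫ z ≫ eqToHom (Functor.congr_obj hΦG' v')) this
      exact h3'
    have h4 : homRR I J G (v := ⟨v, hv⟩) (v' := ⟨v', hv'⟩) f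
        = homRR I J G (v := ⟨v, hv⟩) (v' := ⟨v', hv'⟩) f' := by
      unfold Gmap at h3
      simp only [dif_neg hv, dif_neg hv'] at h3
      simpa using congrArg
        (fun z => eqToHom (Gobj_neg I J G F hv).symm ≫ z ≫ eqToHom (Gobj_neg I J G F hv')) h3
    exact homRR_inj I J G h4
  · intro g
    have e1 : Φf.obj (G.obj v) = Minr I J G ⟨v, hv⟩ :=
      (Functor.congr_obj hΦG' v).trans (Gobj_neg I J G F hv)
    have e1' : Φf.obj (G.obj v') = Minr I J G ⟨v', hv'⟩ :=
      (Functor.congr_obj hΦG' v').trans (Gobj_neg I J G F hv')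
    let f0' : Minr I J G ⟨v, hv⟩ ⟶ Minr I J G ⟨v', hv'⟩ :=
      eqToHom e1.symm ≫ Φf.map g ≫ eqToHom e1'
    let f0 : v ⟶ v' := f0'
    refine ⟨f0, ?_⟩
    have h5 := Functor.congr_hom hretr' g
    simp only [Functor.comp_map, Functor.id_map] at h5
    show G.map f0 = g
    rw [← Psi_rr I J G (v := ⟨v, hv⟩) (v' := ⟨v', hv'⟩) f0]
    show (Psi I J G).map (eqToHom e1.symm ≫ Φf.map g ≫ eqToHom e1') = g
    rw [Functor.map_comp, Functor.map_comp, eqToHom_map, eqToHom_map, h5]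
    simp
    erw [eqToHom_refl, eqToHom_refl, Category.id_comp, Category.comp_id]


/-- If `I : A ↪ B` is a Dwyer map with complementary cosieve `V` (the objects of `B`
not in the image of `I`) and the square with top `F`, left `I`, right `J`, bottom `G`
is a pushout in `Cat`, then `G` is fully faithful on `V`: for all objects `v, v'` of
`B` lying in `V`, the induced map `B(v,v') → D(Gv,Gv')` is a bijection. -/
theorem pushout_inr_fullyFaithful_on_cosieve
    {A B C D : Type u} [SmallCategory A] [SmallCategory B] [SmallCategory C] [SmallCategory D]
    (I : A ⥤ B) (F : A ⥤ C) (J : C ⥤ D) (G : B ⥤ D)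
    (hI : IsDwyerMap I)
    (sq : IsPushout (C := Cat.{u,u}) (Z := Cat.of A) (X := Cat.of C) (Y := Cat.of B)
      (P := Cat.of D) F.toCatHom I.toCatHom J.toCatHom G.toCatHom) :
    ∀ v v' : B, v ∉ Set.range I.obj → v' ∉ Set.range I.obj →
      Function.Bijective (fun f : v ⟶ v' => G.map f) := by
  exact pushout_inr_fullyFaithful_on_cosieve' I F J G hI.injOnObj hI.sieve sq
end

section
/- Let I : A ↪ B be a Dwyer map with complementary cosieve V and minimal cosieve W ⊇ A, let F : A ⥤ C be any functor, and suppose the square with top F, left I, right J : C ⥤ D, bottom G : B ⥤ D is a pushout square in Cat. Then for every object c of C and every object v of B lying in V, the hom-set D(Gv, Jc) is empty; and if moreover v does not lie in W, then the hom-set D(Jc, Gv) is also empty. -/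
open CategoryTheory

universe u

/-- The poset of propositions, lifted to `Type u`, with its preorder category
structure (used as a test category to detect empty hom-sets). -/
def PCat : Type u := ULift.{u} Prop

instance : Preorder PCat.{u} := inferInstanceAs (Preorder (ULift Prop))
instance : SmallCategory PCat.{u} := Preorder.smallCategory PCat.{u}
instance (x y : PCat.{u}) : Subsingleton (x ⟶ y) := Preorder.subsingleton_hom x y

/-- A cosieve (set of objects closed under taking codomains of arrows out of it),
classified as a functor into `PCat`. -/
def cosieveFunctor {B : Type u} [SmallCategory B] (S : Set B)
    (hS : ∀ {b b' : B}, (b ⟶ b') → b ∈ S → b' ∈ S) : B ⥤ PCat.{u} where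
  obj b := ULift.up (b ∈ S)
  map {b b'} f := homOfLE (fun h => hS f h)
  map_id _ := Subsingleton.elim (h := Preorder.subsingleton_hom (α := PCat.{u}) _ _) _ _
  map_comp _ _ := Subsingleton.elim (h := Preorder.subsingleton_hom (α := PCat.{u}) _ _) _ _

/-- The constant functor at a proposition. -/
def constProp {C : Type u} [SmallCategory C] (p : Prop) : C ⥤ PCat.{u} where
  obj _ := ULift.up p
  map _ := 𝟙 _

/-- Let `I : A ↪ B` be a Dwyer map with complementary cosieve `V` (objects of `B`
outside the image of `I`) and minimal cosieve `W = minCosieve I`, and let the square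
with top `F`, left `I`, right `J`, bottom `G` be a pushout in `Cat`.  Then for every
object `c` of `C` and every `v` in `V`, the hom-set `D(Gv, Jc)` is empty; and if
moreover `v ∉ W`, then `D(Jc, Gv)` is also empty. -/
theorem pushout_hom_empty
    {A B C D : Type u} [SmallCategory A] [SmallCategory B] [SmallCategory C] [SmallCategory D]
    (I : A ⥤ B) (F : A ⥤ C) (J : C ⥤ D) (G : B ⥤ D)
    (hI : IsDwyerMap I)
    (sq : IsPushout (C := Cat.{u,u}) (Z := Cat.of A) (X := Cat.of C) (Y := Cat.of B)
      (P := Cat.of D) F.toCatHom I.toCatHom J.toCatHom G.toCatHom)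
    (c : C) (v : B) (hvV : v ∉ Set.range I.obj) :
    IsEmpty (G.obj v ⟶ J.obj c) ∧ (v ∉ minCosieve I → IsEmpty (J.obj c ⟶ G.obj v)) := by
  constructor
  · -- use the sieve classifier χ to see that `V` is a cosieve
    obtain ⟨χ, hχ⟩ := hI.sieve
    have hcos : ∀ {b b' : B}, (b ⟶ b') → b ∉ Set.range I.obj → b' ∉ Set.range I.obj := by
      intro b b' f hb hb'
      apply hb
      rw [← hχ] at hb' ⊢
      have hle : χ.obj b ≤ χ.obj b' := leOfHom (χ.map f)
      omega
    set g : Cat.of B ⟶ Cat.of PCat.{u} :=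
      (cosieveFunctor {b | b ∉ Set.range I.obj} (fun f h => hcos f h)).toCatHom with hg
    set h : Cat.of C ⟶ Cat.of PCat.{u} := (constProp False).toCatHom with hh
    have w : (show Cat.of A ⟶ Cat.of C from F.toCatHom) ≫ h = (show Cat.of A ⟶ Cat.of B from I.toCatHom) ≫ g := by
      apply Cat.ext
      apply CategoryTheory.Functor.ext
      · intro a a' f
        exact Subsingleton.elim (h := Preorder.subsingleton_hom (α := PCat.{u}) _ _) _ _
      · intro a
        show ULift.up False = ULift.up (I.obj a ∉ Set.range I.obj)
        congr 1
        simp only [eq_iff_iff, false_iff, not_not]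
        exact Set.mem_range_self a
    let H : D ⥤ PCat.{u} := (sq.desc h g w).toFunctor
    have hJ : J ⋙ H = h.toFunctor := congrArg Cat.Hom.toFunctor (sq.inl_desc h g w)
    have hG : G ⋙ H = g.toFunctor := congrArg Cat.Hom.toFunctor (sq.inr_desc h g w)
    constructor
    intro f
    have hle := leOfHom (H.map f)
    have e1 : H.obj (G.obj v) = g.toFunctor.obj v := Functor.congr_obj hG v
    have e2 : H.obj (J.obj c) = h.toFunctor.obj c := Functor.congr_obj hJ c
    rw [e1, e2] at hle
    exact hle hvV
  · intro hvW
    -- use the cosieve W = minCosieve I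
    have hcos : ∀ {b b' : B}, (b ⟶ b') → b ∈ minCosieve I → b' ∈ minCosieve I := by
      rintro b b' f ⟨a, ⟨k⟩⟩
      exact ⟨a, ⟨k ≫ f⟩⟩
    set g : Cat.of B ⟶ Cat.of PCat.{u} :=
      (cosieveFunctor (minCosieve I) (fun f h => hcos f h)).toCatHom with hg
    set h : Cat.of C ⟶ Cat.of PCat.{u} := (constProp True).toCatHom with hh
    have w : (show Cat.of A ⟶ Cat.of C from F.toCatHom) ≫ h = (show Cat.of A ⟶ Cat.of B from I.toCatHom) ≫ g := by
      apply Cat.ext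
      apply CategoryTheory.Functor.ext
      · intro a a' f
        exact Subsingleton.elim (h := Preorder.subsingleton_hom (α := PCat.{u}) _ _) _ _
      · intro a
        show ULift.up True = ULift.up (I.obj a ∈ minCosieve I)
        congr 1
        simp only [eq_iff_iff, true_iff]
        exact ⟨a, ⟨𝟙 _⟩⟩
    let H : D ⥤ PCat.{u} := (sq.desc h g w).toFunctor
    have hJ : J ⋙ H = h.toFunctor := congrArg Cat.Hom.toFunctor (sq.inl_desc h g w)
    have hG : G ⋙ H = g.toFunctor := congrArg Cat.Hom.toFunctor (sq.inr_desc h g w)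
    constructor
    intro f
    have hle := leOfHom (H.map f)
    have e1 : H.obj (G.obj v) = g.toFunctor.obj v := Functor.congr_obj hG v
    have e2 : H.obj (J.obj c) = h.toFunctor.obj c := Functor.congr_obj hJ c
    rw [e1, e2] at hle
    exact hvW (hle trivial)
end
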